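/- A Leibniz algebra $(\mathcal{E},[\cdot,\cdot])$ admits a strict product structure (an $E$ with $E^2=\mathrm{Id}$, $E[x,y]=[Ex,y]$ and $E[x,y]=[x,Ey]$ for all $x,y$) if and only if $\mathcal{E}=\mathcal{E}_+\oplus\mathcal{E}_-$ where $\mathcal{E}_+,\mathcal{E}_-$ are subalgebras with $[\mathcal{E}_+,\mathcal{E}_-]=[\mathcal{E}_-,\mathcal{E}_+]=0$, i.e. $\mathcal{E}$ is a direct sum of Leibniz algebras. -/

import Mathlib

/-- A Leibniz algebra admits a strict product structure iff it is a direct sum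
of two Leibniz algebras. -/
theorem stmt10 {K E : Type*} [Field K] [CharZero K] [AddCommGroup E] [Module K E]
    (br : E →ₗ[K] E →ₗ[K] E)
    (hbr : ∀ x y z : E, br x (br y z) = br (br x y) z + br y (br x z)) :
    (∃ P : Module.End K E, P * P = 1 ∧
      (∀ x y : E, P (br x y) = br (P x) y) ∧ (∀ x y : E, P (br x y) = br x (P y)))
    ↔ ∃ p q : Submodule K E, IsCompl p q ∧
        (∀ x ∈ p, ∀ y ∈ p, br x y ∈ p) ∧ (∀ x ∈ q, ∀ y ∈ q, br x y ∈ q) ∧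
        (∀ x ∈ p, ∀ y ∈ q, br x y = 0 ∧ br y x = 0) := by
  constructor
  · rintro ⟨P, hP2, hL, hR⟩
    have hP2' : ∀ x : E, P (P x) = x := fun x => by
      have := congrArg (fun f : Module.End K E => f x) hP2
      simpa [Module.End.mul_apply] using this
    refine ⟨LinearMap.ker (P - 1), LinearMap.ker (P + 1), ?_, ?_, ?_, ?_⟩
    · constructor
      · rw [disjoint_iff_inf_le]
        rintro x ⟨hx1, hx2⟩
        simp only [SetLike.mem_coe, LinearMap.mem_ker, LinearMap.sub_apply,
          LinearMap.add_apply, Module.End.one_apply, sub_eq_zero, add_eq_zero_iff_eq_neg] at hx1 hx2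
        have : (2 : K) • x = 0 := by
          rw [two_smul]; rw [hx1] at hx2; linear_combination (norm := abel) hx2
        simpa [smul_eq_zero] using this
      · rw [codisjoint_iff_le_sup]
        intro x _
        have hx : x = (2⁻¹ : K) • (x + P x) + (2⁻¹ : K) • (x - P x) := by
          module
        rw [hx]
        refine Submodule.add_mem_sup (Submodule.smul_mem _ _ ?_) (Submodule.smul_mem _ _ ?_)
        · simp [LinearMap.mem_ker, map_add, hP2', sub_eq_zero, add_comm]
        · simp [LinearMap.mem_ker, map_sub, hP2']
          abel
    · intro x hx y hy
      simp only [LinearMap.mem_ker, LinearMap.sub_apply, Module.End.one_apply, sub_eq_zero] at hx ⊢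
      rw [hL, hx]
    · intro x hx y hy
      simp only [LinearMap.mem_ker, LinearMap.add_apply, Module.End.one_apply,
        add_eq_zero_iff_eq_neg] at hx ⊢
      rw [hL, hx]
      simp
    · intro x hx y hy
      simp only [LinearMap.mem_ker, LinearMap.sub_apply, LinearMap.add_apply,
        Module.End.one_apply, sub_eq_zero, add_eq_zero_iff_eq_neg] at hx hy
      constructor
      · have h1 : P (br x y) = br x y := by rw [hL, hx]
        have h2 : P (br x y) = -(br x y) := by rw [hR, hy]; simp
        have : (2 : K) • br x y = 0 := by
          rw [two_smul]; nth_rewrite 1 [← h1]; rw [h2]; abel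
        simpa [smul_eq_zero] using this
      · have h1 : P (br y x) = br y x := by rw [hR, hx]
        have h2 : P (br y x) = -(br y x) := by rw [hL, hy]; simp
        have : (2 : K) • br y x = 0 := by
          rw [two_smul]; nth_rewrite 1 [← h1]; rw [h2]; abel
        simpa [smul_eq_zero] using this
  · rintro ⟨p, q, hc, hp, hq, hz⟩
    set f : E →ₗ[K] E := p.subtype ∘ₗ p.projectionOnto q hc with hf
    set g : E →ₗ[K] E := q.subtype ∘ₗ q.projectionOnto p hc.symm with hg
    have hfg : ∀ x : E, f x + g x = x := fun x =>
      Submodule.projection_add_projection_eq_self hc x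
    have hfp : ∀ x : E, f x ∈ p := fun x => (p.projectionOnto q hc x).2
    have hgq : ∀ x : E, g x ∈ q := fun x => (q.projectionOnto p hc.symm x).2
    have hfid : ∀ x : E, x ∈ p → f x = x := fun x hx => by
      simp [hf, Submodule.projectionOnto_apply_of_mem_left hc hx]
    have hf0 : ∀ x : E, x ∈ q → f x = 0 := fun x hx => by
      simp [hf, Submodule.projectionOnto_apply_of_mem_right hc hx]
    have hgid : ∀ x : E, x ∈ q → g x = x := fun x hx => by
      simp [hg, Submodule.projectionOnto_apply_of_mem_left hc.symm hx]
    have hg0 : ∀ x : E, x ∈ p → g x = 0 := fun x hx => by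
      simp [hg, Submodule.projectionOnto_apply_of_mem_right hc.symm hx]
    refine ⟨f - g, ?_, ?_, ?_⟩
    · ext x
      simp only [Module.End.mul_apply, LinearMap.sub_apply, Module.End.one_apply, map_sub]
      rw [hfid _ (hfp x), hg0 _ (hfp x), hf0 _ (hgq x), hgid _ (hgq x)]
      have h := hfg x
      simp only [sub_zero, zero_sub, sub_neg_eq_add]
      exact h
    · intro x y
      have key : ∀ x y : E, br x y = br (f x) (f y) + br (g x) (g y) := by
        intro x y
        have hx := hfg x; have hy := hfg y
        calc br x y = br (f x + g x) (f y + g y) := by rw [hx, hy]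
          _ = br (f x) (f y) + br (f x) (g y) + (br (g x) (f y) + br (g x) (g y)) := by
              simp only [map_add, LinearMap.add_apply]; abel
          _ = br (f x) (f y) + br (g x) (g y) := by
              rw [(hz _ (hfp x) _ (hgq y)).1, (hz _ (hfp y) _ (hgq x)).2]; abel
      have keyP : ∀ x y : E, br (f x - g x) y = br (f x) (f y) - br (g x) (g y) := by
        intro x y
        have hy := hfg y
        calc br (f x - g x) y = br (f x - g x) (f y + g y) := by rw [hy]
          _ = br (f x) (f y) + br (f x) (g y) - (br (g x) (f y) + br (g x) (g y)) := by
              simp [map_add, map_sub]; abel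
          _ = br (f x) (f y) - br (g x) (g y) := by
              rw [(hz _ (hfp x) _ (hgq y)).1, (hz _ (hfp y) _ (hgq x)).2]; abel
      simp only [LinearMap.sub_apply]
      rw [key x y, keyP x y, map_add, map_add]
      rw [hfid _ (hp _ (hfp x) _ (hfp y)), hg0 _ (hp _ (hfp x) _ (hfp y)),
        hf0 _ (hq _ (hgq x) _ (hgq y)), hgid _ (hq _ (hgq x) _ (hgq y))]
      abel
    · intro x y
      have key : ∀ x y : E, br x y = br (f x) (f y) + br (g x) (g y) := by
        intro x y
        have hx := hfg x; have hy := hfg y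
        calc br x y = br (f x + g x) (f y + g y) := by rw [hx, hy]
          _ = br (f x) (f y) + br (f x) (g y) + (br (g x) (f y) + br (g x) (g y)) := by
              simp only [map_add, LinearMap.add_apply]; abel
          _ = br (f x) (f y) + br (g x) (g y) := by
              rw [(hz _ (hfp x) _ (hgq y)).1, (hz _ (hfp y) _ (hgq x)).2]; abel
      have keyP : ∀ x y : E, br x (f y - g y) = br (f x) (f y) - br (g x) (g y) := by
        intro x y
        have hx := hfg x
        calc br x (f y - g y) = br (f x + g x) (f y - g y) := by rw [hx]
          _ = br (f x) (f y) - br (f x) (g y) + (br (g x) (f y) - br (g x) (g y)) := by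
              simp [map_add, map_sub]; abel
          _ = br (f x) (f y) - br (g x) (g y) := by
              rw [(hz _ (hfp x) _ (hgq y)).1, (hz _ (hfp y) _ (hgq x)).2]; abel
      simp only [LinearMap.sub_apply]
      rw [key x y, keyP x y, map_add, map_add]
      rw [hfid _ (hp _ (hfp x) _ (hfp y)), hg0 _ (hp _ (hfp x) _ (hfp y)),
        hf0 _ (hq _ (hgq x) _ (hgq y)), hgid _ (hq _ (hgq x) _ (hgq y))]
      abel
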